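/- A fragment CPC↾_B of classical propositional logic is universal if and only if the implication function → is definable from B (i.e., → ∈ [B]). -/

import Mathlib

/-- Membership in the clone generated by a family `B` of Boolean functions. -/
inductive InClone (B : ∀ n : ℕ, Set ((Fin n → Bool) → Bool)) :
    ∀ n : ℕ, ((Fin n → Bool) → Bool) → Prop
  | of {n : ℕ} {f : (Fin n → Bool) → Bool} : f ∈ B n → InClone B n f
  | proj {n : ℕ} (i : Fin n) : InClone B n (fun x => x i)
  | comp {n m : ℕ} (f : (Fin m → Bool) → Bool) (g : Fin m → ((Fin n → Bool) → Bool)) :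
      InClone B m f → (∀ i, InClone B n (g i)) →
      InClone B n (fun x => f (fun i => g i x))

/-- Boolean implication as a binary Boolean function. -/
def impFun : (Fin 2 → Bool) → Bool := fun x => !(x 0) || x 1

/-- Formulas over countably many variables built from the connectives in `B`. -/
inductive BForm (B : ∀ n : ℕ, Set ((Fin n → Bool) → Bool)) : Type
  | var : ℕ → BForm B
  | app : ∀ {n : ℕ} (f : (Fin n → Bool) → Bool), f ∈ B n → (Fin n → BForm B) → BForm B

/-- Boolean evaluation of a `B`-formula. -/
def BForm.eval {B : ∀ n : ℕ, Set ((Fin n → Bool) → Bool)} (v : ℕ → Bool) :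
    BForm B → Bool
  | .var n => v n
  | .app f _ ts => f (fun i => (ts i).eval v)

/-- A Tarski-style deductive system. -/
structure DeductiveSystem (F : Type) where
  Thm : Set F → F → Prop
  refl : ∀ φ : F, Thm {φ} φ
  mono : ∀ {Γ Γ' : Set F} {φ : F}, Thm Γ φ → Γ ⊆ Γ' → Thm Γ' φ
  cut : ∀ {Γ Δ : Set F} {φ : F}, Thm Γ φ → (∀ ψ ∈ Γ, Thm Δ ψ) → Thm Δ φ

/-- Finitarity. -/
def DeductiveSystem.Finitary {F : Type} (L : DeductiveSystem F) : Prop :=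
  ∀ (Γ : Set F) (φ : F), L.Thm Γ φ → ∃ Γ' ⊆ Γ, Γ'.Finite ∧ L.Thm Γ' φ

/-- The fragment `CPC↾_B` of classical logic, as a deductive system. -/
def CpcB (B : ∀ n : ℕ, Set ((Fin n → Bool) → Bool)) : DeductiveSystem (BForm B) where
  Thm Γ φ := ∀ v : ℕ → Bool, (∀ ψ ∈ Γ, ψ.eval v = true) → φ.eval v = true
  refl φ := fun v h => h φ rfl
  mono h hsub := fun v hv => h v (fun ψ hψ => hv ψ (hsub hψ))
  cut h hall := fun v hv => h v (fun ψ hψ => hall ψ hψ v hv)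

/-- A conservative translation. -/
def IsConservative {F0 F1 : Type} (L0 : DeductiveSystem F0) (L1 : DeductiveSystem F1)
    (f : F0 → F1) : Prop :=
  ∀ (Γ : Set F0) (φ : F0), L0.Thm Γ φ ↔ L1.Thm (f '' Γ) (f φ)

/-- Universality: every finitary deductive system over countably many formulas
conservatively translates into `L`. -/
def Universal {F1 : Type} (L1 : DeductiveSystem F1) : Prop :=
  ∀ (F0 : Type), Countable F0 → ∀ L0 : DeductiveSystem F0, L0.Finitary →
    ∃ f : F0 → F1, IsConservative L0 L1 f


open Function

section Part1
variable {B : ∀ n : ℕ, Set ((Fin n → Bool) → Bool)}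

lemma realize {n : ℕ} {g : (Fin n → Bool) → Bool} (hg : InClone B n g) :
    ∀ args : Fin n → BForm B, ∃ t : BForm B, ∀ v, t.eval v = g (fun i => (args i).eval v) := by
  induction hg with
  | of h => exact fun args => ⟨.app _ h args, fun v => rfl⟩
  | proj i => exact fun args => ⟨args i, fun v => rfl⟩
  | comp f g hf hg ihf ihg =>
      intro args
      choose s hs using fun i => ihg i args
      obtain ⟨t, ht⟩ := ihf s
      exact ⟨t, fun v => by rw [ht]; congr 1; funext i; exact hs i v⟩

variable (hImp : InClone B 2 impFun)

noncomputable def impT (a b : BForm B) : BForm B :=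
  (realize hImp ![a, b]).choose

lemma impT_eval (a b : BForm B) (v : ℕ → Bool) :
    (impT hImp a b).eval v = (!(a.eval v) || b.eval v) := by
  unfold impT
  rw [(realize hImp ![a, b]).choose_spec v]
  simp [impFun]

def qF : BForm B := .var 1

noncomputable def andT (a b : BForm B) : BForm B := impT hImp (impT hImp a (impT hImp b qF)) qF
noncomputable def orT (a b : BForm B) : BForm B := impT hImp (impT hImp a qF) b
noncomputable def bigAndT (l : List (BForm B)) : BForm B := l.foldr (andT hImp) (impT hImp qF qF)
noncomputable def bigOrT (l : List (BForm B)) : BForm B := l.foldr (orT hImp) qF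

variable {v : ℕ → Bool}

lemma qF_eval (hv : v 1 = false) : (qF : BForm B).eval v = false := hv

lemma andT_eval (hv : v 1 = false) (a b : BForm B) : (andT hImp a b).eval v = (a.eval v && b.eval v) := by
  simp [andT, impT_eval, qF, BForm.eval, hv]

lemma orT_eval (hv : v 1 = false) (a b : BForm B) : (orT hImp a b).eval v = (a.eval v || b.eval v) := by
  simp [orT, impT_eval, qF, BForm.eval, hv]

lemma bigAndT_eval (hv : v 1 = false) (l : List (BForm B)) :
    (bigAndT hImp l).eval v = l.all (fun t => t.eval v) := by
  induction l with
  | nil => simp [bigAndT, impT_eval, qF, BForm.eval, hv]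
  | cons a l ih =>
      simp only [bigAndT, List.foldr] at ih ⊢
      rw [andT_eval hImp hv, ih, List.all_cons]

lemma bigOrT_eval (hv : v 1 = false) (l : List (BForm B)) :
    (bigOrT hImp l).eval v = l.any (fun t => t.eval v) := by
  induction l with
  | nil => simp [bigOrT, qF, BForm.eval, hv]
  | cons a l ih =>
      simp only [bigOrT, List.foldr] at ih ⊢
      rw [orT_eval hImp hv, ih, List.any_cons]

end Part1

section Forward
attribute [local instance] Classical.propDecidable
variable {B : ∀ n : ℕ, Set ((Fin n → Bool) → Bool)} (hImp : InClone B 2 impFun)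
variable {F0 : Type} (L : DeductiveSystem F0) (e : F0 → ℕ) (he : Function.Injective e)

noncomputable def Sfin (n : ℕ) : Finset F0 :=
  Set.Finite.toFinset (Set.Finite.preimage he.injOn (Set.finite_Iio n))

lemma mem_Sfin {n : ℕ} {φ : F0} : φ ∈ Sfin e he n ↔ e φ < n := by
  simp [Sfin]

noncomputable def Dset (n : ℕ) (χ : F0) : Finset (Finset F0) :=
  (Sfin e he n).powerset.filter (fun Δ => L.Thm ↑Δ χ)

noncomputable def Rset (n : ℕ) (χ : F0) : Finset (Finset F0 × ℕ) :=
  ((Sfin e he n).powerset ×ˢ Finset.range n).filter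
    (fun p => ∃ ψ, e ψ = p.2 ∧ L.Thm (↑p.1 ∪ {χ}) ψ)

lemma mem_Rset {n : ℕ} {χ : F0} {p : Finset F0 × ℕ} :
    p ∈ Rset L e he n χ ↔
      ((∀ δ ∈ p.1, e δ < n) ∧ p.2 < n) ∧ ∃ ψ, e ψ = p.2 ∧ L.Thm (↑p.1 ∪ {χ}) ψ := by
  rw [Rset, Finset.mem_filter, Finset.mem_product, Finset.mem_powerset, Finset.mem_range]
  constructor
  · rintro ⟨⟨h1, h2⟩, h3⟩
    exact ⟨⟨fun δ hδ => mem_Sfin e he |>.mp (h1 hδ), h2⟩, h3⟩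
  · rintro ⟨⟨h1, h2⟩, h3⟩
    exact ⟨⟨fun δ hδ => (mem_Sfin e he).mpr (h1 δ hδ), h2⟩, h3⟩

lemma mem_Dset {n : ℕ} {χ : F0} {Δ : Finset F0} :
    Δ ∈ Dset L e he n χ ↔ (∀ δ ∈ Δ, e δ < n) ∧ L.Thm ↑Δ χ := by
  rw [Dset, Finset.mem_filter, Finset.mem_powerset]
  constructor
  · rintro ⟨h1, h2⟩; exact ⟨fun δ hδ => (mem_Sfin e he).mp (h1 hδ), h2⟩
  · rintro ⟨h1, h2⟩; exact ⟨fun δ hδ => (mem_Sfin e he).mpr (h1 δ hδ), h2⟩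

noncomputable def body (n : ℕ) (χ : F0) (prev : ℕ → BForm B) : BForm B :=
  andT hImp
    (orT hImp (.var (2 * n))
      (bigOrT hImp ((Dset L e he n χ).toList.map
        (fun Δ => bigAndT hImp (Δ.toList.map (fun δ => BForm.var (2 * e δ)))))))
    (bigAndT hImp ((Rset L e he n χ).toList.map
      (fun p => impT hImp (bigAndT hImp (p.1.toList.map (fun δ => prev (e δ)))) (prev p.2))))

lemma body_congr (n : ℕ) (χ : F0) (prev prev' : ℕ → BForm B)
    (h : ∀ k < n, prev k = prev' k) :
    body hImp L e he n χ prev = body hImp L e he n χ prev' := by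
  unfold body
  congr 1
  apply congrArg
  apply List.map_congr_left
  intro p hp
  have hmem := (mem_Rset L e he).mp (Finset.mem_toList.mp hp)
  congr 1
  · apply congrArg
    apply List.map_congr_left
    intro δ hδ
    exact h _ (hmem.1.1 δ (Finset.mem_toList.mp hδ))
  · exact h p.2 hmem.1.2

noncomputable def bodyF (n : ℕ) (prev : ℕ → BForm B) : BForm B :=
  if h : ∃ φ, e φ = n then body hImp L e he n h.choose prev else .var 0

noncomputable def GG : ℕ → ℕ → BForm B
  | 0 => fun _ => .var 0
  | (n+1) => fun k => if k = n then bodyF hImp L e he n (GG n) else GG n k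

noncomputable def FF (n : ℕ) : BForm B := GG hImp L e he (n+1) n

lemma GG_eq : ∀ (m k : ℕ), k < m → GG hImp L e he m k = FF hImp L e he k := by
  intro m
  induction m with
  | zero => omega
  | succ n ih =>
      intro k hk
      by_cases h : k = n
      · subst h; rfl
      · have hkn : k < n := by omega
        have : GG hImp L e he (n+1) k = GG hImp L e he n k := by
          simp [GG, h]
        rw [this, ih k hkn]

lemma FF_eq (φ : F0) :
    FF hImp L e he (e φ) = body hImp L e he (e φ) φ (FF hImp L e he) := by
  have hstep : FF hImp L e he (e φ) = bodyF hImp L e he (e φ) (GG hImp L e he (e φ)) := by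
    simp [FF, GG]
  rw [hstep]
  have hex : ∃ ψ, e ψ = e φ := ⟨φ, rfl⟩
  rw [bodyF, dif_pos hex]
  have hch : hex.choose = φ := he hex.choose_spec
  rw [hch]
  exact body_congr hImp L e he (e φ) φ _ _ (fun k hk => GG_eq hImp L e he (e φ) k hk)

lemma impBool : ∀ (x y : Bool), ((!x || y) = true) ↔ (x = true → y = true) := by decide

lemma FF_eval (φ : F0) {v : ℕ → Bool} (hv : v 1 = false) :
    (FF hImp L e he (e φ)).eval v = true ↔
      ((v (2 * e φ) = true ∨ ∃ Δ ∈ Dset L e he (e φ) φ, ∀ δ ∈ Δ, v (2 * e δ) = true) ∧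
       (∀ p ∈ Rset L e he (e φ) φ,
         (∀ δ ∈ p.1, (FF hImp L e he (e δ)).eval v = true) →
         (FF hImp L e he p.2).eval v = true)) := by
  have hbig : ∀ (s : Finset F0) (g : F0 → BForm B),
      ((bigAndT hImp (s.toList.map (fun δ => g δ))).eval v = true)
        ↔ ∀ δ ∈ s, (g δ).eval v = true := by
    intro s g
    rw [bigAndT_eval hImp hv, List.all_eq_true]
    constructor
    · intro h δ hδ
      exact h _ (List.mem_map.mpr ⟨δ, Finset.mem_toList.mpr hδ, rfl⟩)
    · intro h t ht
      obtain ⟨δ, hδ, rfl⟩ := List.mem_map.mp ht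
      exact h δ (Finset.mem_toList.mp hδ)
  rw [FF_eq]
  unfold body
  rw [andT_eval hImp hv, orT_eval hImp hv, bigOrT_eval hImp hv, bigAndT_eval hImp hv]
  simp only [Bool.and_eq_true, Bool.or_eq_true, List.any_eq_true, List.all_eq_true,
    List.mem_map, Finset.mem_toList, exists_exists_and_eq_and, forall_exists_index, and_imp,
    forall_apply_eq_imp_iff₂]
  constructor
  · rintro ⟨h1, h2⟩
    refine ⟨?_, ?_⟩
    · rcases h1 with h1 | ⟨Δ, hΔ, ht⟩
      · exact Or.inl h1
      · refine Or.inr ⟨Δ, hΔ, ?_⟩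
        have := (hbig Δ (fun δ => BForm.var (2 * e δ))).mp ht
        exact fun δ hδ => this δ hδ
    · intro p hp hprem
      have := h2 p hp
      rw [impT_eval, impBool] at this
      exact this ((hbig p.1 (fun δ => FF hImp L e he (e δ))).mpr hprem)
  · rintro ⟨h1, h2⟩
    refine ⟨?_, ?_⟩
    · rcases h1 with h1 | ⟨Δ, hΔ, hall⟩
      · exact Or.inl h1
      · exact Or.inr ⟨Δ, hΔ, (hbig Δ (fun δ => BForm.var (2 * e δ))).mpr hall⟩
    · intro p hp
      rw [impT_eval, impBool]
      intro hb
      exact h2 p hp ((hbig p.1 (fun δ => FF hImp L e he (e δ))).mp hb)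

noncomputable def vT (T : Set F0) : ℕ → Bool := fun m => decide (∃ φ ∈ T, 2 * e φ = m)

lemma vT_one (T : Set F0) : vT e T 1 = false := by
  simp only [vT, decide_eq_false_iff_not]
  rintro ⟨φ, -, h⟩
  omega

lemma vT_var (hee : Function.Injective e) (T : Set F0) (φ : F0) : vT e T (2 * e φ) = true ↔ φ ∈ T := by
  simp only [vT, decide_eq_true_eq]
  constructor
  · rintro ⟨ψ, hψ, h2⟩
    have : ψ = φ := hee (by omega)
    exact this ▸ hψ
  · intro h
    exact ⟨φ, h, rfl⟩

lemma complete (T : Set F0) (hT : ∀ χ, L.Thm T χ → χ ∈ T) :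
    ∀ n (φ : F0), e φ = n → ((FF hImp L e he n).eval (vT e T) = true ↔ φ ∈ T) := by
  intro n
  induction n using Nat.strong_induction_on with
  | _ n ih =>
    intro φ hn
    subst hn
    rw [FF_eval hImp L e he φ (vT_one e T)]
    constructor
    · rintro ⟨h1, -⟩
      by_contra hφT
      rcases h1 with hvar | ⟨Δ, hΔ, hall⟩
      · exact hφT ((vT_var e he T φ).mp hvar)
      · rw [mem_Dset L e he] at hΔ
        have hsub : ↑Δ ⊆ T := fun δ hδ => (vT_var e he T δ).mp (hall δ hδ)
        exact hφT (hT φ (L.mono hΔ.2 hsub))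
    · intro hφT
      refine ⟨Or.inl ((vT_var e he T φ).mpr hφT), ?_⟩
      intro p hp hprem
      rw [mem_Rset L e he] at hp
      obtain ⟨⟨hpb, hp2⟩, ψ, hψe, hthm⟩ := hp
      have hΔT : ↑p.1 ∪ {φ} ⊆ T := by
        rintro x (hx | hx)
        · have hx' : x ∈ p.1 := hx
          exact (ih (e x) (hpb x hx') x rfl).mp (hprem x hx')
        · rw [Set.mem_singleton_iff] at hx
          exact hx ▸ hφT
      have hψT : ψ ∈ T := hT ψ (L.mono hthm hΔT)
      exact (ih p.2 hp2 ψ hψe).mpr hψT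

lemma sound : ∀ N, ∀ (Δ : Finset F0) (χ : F0), (∀ δ ∈ Δ, e δ < N) → e χ < N →
    L.Thm ↑Δ χ → ∀ v, v 1 = false → (∀ δ ∈ Δ, (FF hImp L e he (e δ)).eval v = true) →
    (FF hImp L e he (e χ)).eval v = true := by
  intro N
  induction N using Nat.strong_induction_on with
  | _ N ih =>
    intro Δ χ hΔb hχb hthm v hv hprem
    by_cases hψex : ∃ ψ ∈ Δ, e χ < e ψ
    · obtain ⟨ψ₀, hψ₀, hψ₀lt⟩ := hψex
      obtain ⟨ψ, hψΔ, hψmax⟩ := Finset.exists_max_image Δ e ⟨ψ₀, hψ₀⟩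
      have hχψ : e χ < e ψ := lt_of_lt_of_le hψ₀lt (hψmax ψ₀ hψ₀)
      have hmem : (Δ.erase ψ, e χ) ∈ Rset L e he (e ψ) ψ := by
        rw [mem_Rset L e he]
        refine ⟨⟨?_, hχψ⟩, χ, rfl, ?_⟩
        · intro δ hδ
          obtain ⟨hne, hδΔ⟩ := Finset.mem_erase.mp hδ
          exact lt_of_le_of_ne (hψmax δ hδΔ) (fun hcon => hne (he hcon))
        · refine L.mono hthm ?_
          intro x hx
          have hxΔ : x ∈ Δ := hx
          by_cases hxψ : x = ψ
          · exact Or.inr (by simp [hxψ])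
          · exact Or.inl (Finset.mem_erase.mpr ⟨hxψ, hxΔ⟩)
      have hFψ := (FF_eval hImp L e he ψ hv).mp (hprem ψ hψΔ)
      have := hFψ.2 (Δ.erase ψ, e χ) hmem (fun δ hδ => hprem δ (Finset.mem_of_mem_erase hδ))
      exact this
    · push_neg at hψex
      by_cases hχΔ : χ ∈ Δ
      · exact hprem χ hχΔ
      have hlt : ∀ δ ∈ Δ, e δ < e χ := fun δ hδ =>
        lt_of_le_of_ne (hψex δ hδ) (fun h => hχΔ (he h ▸ hδ))
      rw [FF_eval hImp L e he χ hv]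
      constructor
      · -- first component
        have hsel : ∀ δ ∈ Δ, ∃ Δ'' : Finset F0, (∀ x ∈ Δ'', v (2 * e x) = true) ∧
            (∀ x ∈ Δ'', e x ≤ e δ) ∧ L.Thm ↑Δ'' δ := by
          intro δ hδ
          have h1 := ((FF_eval hImp L e he δ hv).mp (hprem δ hδ)).1
          rcases h1 with hvar | ⟨Δ'', hΔ'', hall⟩
          · refine ⟨{δ}, ?_, ?_, ?_⟩
            · intro x hx; rw [Finset.mem_singleton] at hx; exact hx ▸ hvar
            · intro x hx; rw [Finset.mem_singleton] at hx; exact hx ▸ le_refl _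
            · simpa using L.refl δ
          · rw [mem_Dset L e he] at hΔ''
            exact ⟨Δ'', hall, fun x hx => le_of_lt (hΔ''.1 x hx), hΔ''.2⟩
        choose sel hsel1 hsel2 hsel3 using hsel
        refine Or.inr ⟨Δ.attach.biUnion (fun x => sel x.1 x.2), ?_, ?_⟩
        · rw [mem_Dset L e he]
          constructor
          · intro x hx
            obtain ⟨⟨δ, hδ⟩, -, hxsel⟩ := Finset.mem_biUnion.mp hx
            exact lt_of_le_of_lt (hsel2 δ hδ x hxsel) (hlt δ hδ)
          · refine L.cut hthm ?_
            intro ψ hψ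
            have hψΔ : ψ ∈ Δ := hψ
            refine L.mono (hsel3 ψ hψΔ) ?_
            intro x hx
            have hx' : x ∈ sel ψ hψΔ := hx
            exact Finset.mem_biUnion.mpr ⟨⟨ψ, hψΔ⟩, Finset.mem_attach _ _, hx'⟩
        · intro x hx
          obtain ⟨⟨δ, hδ⟩, -, hxsel⟩ := Finset.mem_biUnion.mp hx
          exact hsel1 δ hδ x hxsel
      · -- second component
        intro p hp hpprem
        rw [mem_Rset L e he] at hp
        obtain ⟨⟨hpb, hp2⟩, ψp, hψpe, hψpthm⟩ := hp
        have hcut : L.Thm ↑(Δ ∪ p.1) ψp := by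
          refine L.cut hψpthm ?_
          rintro x (hx | hx)
          · have hx' : x ∈ p.1 := hx
            refine L.mono (L.refl x) ?_
            intro y hy
            rw [Set.mem_singleton_iff] at hy
            subst hy
            exact Finset.mem_coe.mpr (Finset.mem_union_right _ hx')
          · rw [Set.mem_singleton_iff] at hx
            subst hx
            exact L.mono hthm (fun y hy => Finset.mem_coe.mpr
              (Finset.mem_union_left _ (Finset.mem_coe.mp hy)))
        have hres := ih (e χ) hχb (Δ ∪ p.1) ψp ?_ ?_ hcut v hv ?_
        · rw [← hψpe]; exact hres
        · intro δ hδ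
          rcases Finset.mem_union.mp hδ with h | h
          · exact hlt δ h
          · exact hpb δ h
        · rw [hψpe]; exact hp2
        · intro δ hδ
          rcases Finset.mem_union.mp hδ with h | h
          · exact hprem δ h
          · exact hpprem δ h

noncomputable def trF (φ : F0) : BForm B :=
  impT hImp (impT hImp (FF hImp L e he (e φ)) qF) qF

lemma trF_eval_false {v : ℕ → Bool} (hv : v 1 = false) (φ : F0) :
    (trF hImp L e he φ).eval v = (FF hImp L e he (e φ)).eval v := by
  simp [trF, impT_eval, qF, BForm.eval, hv]

lemma trF_eval_true {v : ℕ → Bool} (hv : v 1 = true) (φ : F0) :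
    (trF hImp L e he φ).eval v = true := by
  simp [trF, impT_eval, qF, BForm.eval, hv]

theorem forward (hImp2 : InClone B 2 impFun) : Universal (CpcB B) := by
  have hImp := hImp2
  intro F0 hcnt L hfin
  obtain ⟨e, he⟩ := Countable.exists_injective_nat F0
  refine ⟨trF hImp L e he, fun Γ φ => ⟨?_, ?_⟩⟩
  · intro hthm
    obtain ⟨Γ', hΓ'sub, hΓ'fin, hΓ'thm⟩ := hfin Γ φ hthm
    intro v hv
    by_cases hv1 : v 1 = true
    · exact trF_eval_true hImp L e he hv1 φ
    · have hv1' : v 1 = false := by simpa using hv1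
      rw [trF_eval_false hImp L e he hv1' φ]
      have hthm' : L.Thm (↑hΓ'fin.toFinset) φ := by
        rw [hΓ'fin.coe_toFinset]; exact hΓ'thm
      refine sound hImp L e he ((hΓ'fin.toFinset.sup e ⊔ e φ) + 1) hΓ'fin.toFinset φ ?_ ?_
        hthm' v hv1' ?_
      · intro δ hδ
        have := Finset.le_sup (f := e) hδ
        omega
      · have : e φ ≤ hΓ'fin.toFinset.sup e ⊔ e φ := le_max_right _ _
        omega
      · intro δ hδ
        have hδΓ : δ ∈ Γ := hΓ'sub (hΓ'fin.mem_toFinset.mp hδ)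
        have := hv (trF hImp L e he δ) ⟨δ, hδΓ, rfl⟩
        rwa [trF_eval_false hImp L e he hv1' δ] at this
  · intro hsem
    by_contra hthm
    set T : Set F0 := {χ | L.Thm Γ χ} with hTdef
    have hT : ∀ χ, L.Thm T χ → χ ∈ T := fun χ h => L.cut h (fun ψ hψ => hψ)
    have hΓT : Γ ⊆ T := fun ψ hψ =>
      L.mono (L.refl ψ) (by rw [Set.singleton_subset_iff]; exact hψ)
    have h1 : ∀ t ∈ trF hImp L e he '' Γ, t.eval (vT e T) = true := by
      rintro t ⟨γ, hγ, rfl⟩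
      rw [trF_eval_false hImp L e he (vT_one e T) γ]
      exact (complete hImp L e he T hT (e γ) γ rfl).mpr (hΓT hγ)
    have h2 := hsem (vT e T) h1
    rw [trF_eval_false hImp L e he (vT_one e T) φ] at h2
    exact hthm ((complete hImp L e he T hT (e φ) φ rfl).mp h2)


end Forward

section Obstruct
variable {B : ∀ n : ℕ, Set ((Fin n → Bool) → Bool)}

def AffN {n : ℕ} (f : (Fin n → Bool) → Bool) : Prop :=
  ∀ x y z, f (fun i => xor (x i) (xor (y i) (z i))) = xor (f x) (xor (f y) (f z))

def MonoN {n : ℕ} (f : (Fin n → Bool) → Bool) : Prop :=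
  ∀ x y, (∀ i, x i = true → y i = true) → f x = true → f y = true

lemma eval_P0 (hB : ∀ n, ∀ f ∈ B n, f (fun _ => false) = false) (t : BForm B) :
    t.eval (fun _ => false) = false := by
  induction t with
  | var n => rfl
  | app f hf ts ih =>
      show f (fun i => (ts i).eval _) = false
      have h1 : (fun i => (ts i).eval (fun _ => false)) = (fun _ => false) :=
        funext fun i => ih i
      rw [h1]; exact hB _ f hf

lemma eval_SD (hB : ∀ n, ∀ f ∈ B n, ∀ x, f (fun i => !(x i)) = !(f x)) (t : BForm B)
    (v : ℕ → Bool) : t.eval (fun m => !(v m)) = !(t.eval v) := by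
  induction t with
  | var n => rfl
  | app f hf ts ih =>
      show f (fun i => (ts i).eval _) = !(f fun i => (ts i).eval v)
      have h1 : (fun i => (ts i).eval (fun m => !(v m))) = (fun i => !((ts i).eval v)) :=
        funext fun i => ih i
      rw [h1]; exact hB _ f hf _

lemma eval_Aff (hB : ∀ n, ∀ f ∈ B n, AffN f) (t : BForm B) (x y z : ℕ → Bool) :
    t.eval (fun i => xor (x i) (xor (y i) (z i))) =
      xor (t.eval x) (xor (t.eval y) (t.eval z)) := by
  induction t with
  | var n => rfl
  | app f hf ts ih =>
      show f (fun i => (ts i).eval _) = _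
      have h1 : (fun i => (ts i).eval (fun m => xor (x m) (xor (y m) (z m)))) =
          (fun i => xor ((ts i).eval x) (xor ((ts i).eval y) ((ts i).eval z))) :=
        funext fun i => ih i
      rw [h1]; exact hB _ f hf _ _ _

lemma eval_Mono (hB : ∀ n, ∀ f ∈ B n, MonoN f) (t : BForm B) (v w : ℕ → Bool)
    (hvw : ∀ i, v i = true → w i = true) : t.eval v = true → t.eval w = true := by
  induction t with
  | var n => exact hvw n
  | app f hf ts ih =>
      show f (fun i => (ts i).eval v) = true → f (fun i => (ts i).eval w) = true
      exact hB _ f hf _ _ (fun i => ih i)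

lemma eval_support (t : BForm B) :
    ∃ E : Finset ℕ, ∀ v w : ℕ → Bool, (∀ i ∈ E, v i = w i) → t.eval v = t.eval w := by
  induction t with
  | var n => exact ⟨{n}, fun v w h => h n (Finset.mem_singleton_self n)⟩
  | app f hf ts ih =>
      choose Es hEs using ih
      refine ⟨Finset.univ.biUnion Es, fun v w h => ?_⟩
      show f _ = f _
      congr 1
      funext i
      exact hEs i v w (fun j hj => h j (Finset.mem_biUnion.mpr ⟨i, Finset.mem_univ i, hj⟩))

lemma not_cpc {S : Set (BForm B)} {t : BForm B} (h : ¬ (CpcB B).Thm S t) :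
    ∃ v, (∀ ψ ∈ S, ψ.eval v = true) ∧ t.eval v = false := by
  by_contra hcon
  push_neg at hcon
  apply h
  intro v hv
  have := hcon v hv
  cases hev : t.eval v
  · exact absurd hev this
  · rfl

def Ltriv : DeductiveSystem PUnit where
  Thm _ _ := True
  refl _ := trivial
  mono _ _ := trivial
  cut _ _ := trivial

lemma Ltriv_fin : Ltriv.Finitary :=
  fun _ φ _ => ⟨∅, Set.empty_subset _, Set.finite_empty, trivial⟩

lemma obstruct_valid (hU : Universal (CpcB B)) : ∃ t : BForm B, ∀ v, t.eval v = true := by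
  obtain ⟨tr, htr⟩ := hU PUnit inferInstance Ltriv Ltriv_fin
  have h := (htr ∅ PUnit.unit).mp trivial
  rw [Set.image_empty] at h
  exact ⟨tr PUnit.unit, fun v => h v (fun ψ hψ => absurd hψ (Set.notMem_empty ψ))⟩

lemma obstruct_P0 (hU : Universal (CpcB B)) :
    ¬(∀ n, ∀ f ∈ B n, f (fun _ => false) = false) := by
  intro hB
  obtain ⟨t, ht⟩ := obstruct_valid hU
  have := ht (fun _ => false)
  rw [eval_P0 hB] at this
  exact Bool.false_ne_true this

lemma obstruct_SD (hU : Universal (CpcB B)) :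
    ¬(∀ n, ∀ f ∈ B n, ∀ x, f (fun i => !(x i)) = !(f x)) := by
  intro hB
  obtain ⟨t, ht⟩ := obstruct_valid hU
  have h1 := ht (fun _ => false)
  have h2 := ht (fun _ => true)
  have h3 : t.eval (fun m => !((fun _ => false) m)) = !(t.eval (fun _ => false)) :=
    eval_SD hB t (fun _ => false)
  simp only [Bool.not_false] at h3
  rw [h1, h2] at h3
  exact absurd (h3.trans rfl) (by decide)

def Laff : DeductiveSystem (Fin 3) where
  Thm Γ i := i ∈ Γ ∨ (i = 1 ∧ 0 ∈ Γ)
  refl φ := Or.inl rfl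
  mono h hsub := by
    rcases h with h | ⟨h1, h2⟩
    · exact Or.inl (hsub h)
    · exact Or.inr ⟨h1, hsub h2⟩
  cut h hall := by
    rcases h with h | ⟨h1, h0⟩
    · exact hall _ h
    · rcases hall 0 h0 with h' | ⟨-, h0'⟩
      · exact Or.inr ⟨h1, h'⟩
      · exact Or.inr ⟨h1, h0'⟩

lemma Laff_fin : Laff.Finitary := by
  intro Γ φ h
  rcases h with h | ⟨h1, h0⟩
  · exact ⟨{φ}, Set.singleton_subset_iff.mpr h, Set.finite_singleton _, Or.inl rfl⟩
  · exact ⟨{0}, Set.singleton_subset_iff.mpr h0, Set.finite_singleton _, Or.inr ⟨h1, rfl⟩⟩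

lemma obstruct_Aff (hU : Universal (CpcB B)) : ¬(∀ n, ∀ f ∈ B n, AffN f) := by
  intro hB
  obtain ⟨tr, htr⟩ := hU (Fin 3) inferInstance Laff Laff_fin
  set A := (tr 0).eval with hAdef
  set C := (tr 1).eval with hCdef
  have himg : ∀ i : Fin 3, tr '' {i} = {tr i} := fun i => Set.image_singleton
  -- A ⊨ C
  have hAC : ∀ v, A v = true → C v = true := by
    have h := (htr {0} 1).mp (Or.inr ⟨rfl, rfl⟩)
    rw [himg] at h
    intro v hv
    exact h v (fun ψ hψ => by rw [Set.mem_singleton_iff] at hψ; rw [hψ]; exact hv)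
  -- C ⊭ A
  have hCA : ∃ v, C v = true ∧ A v = false := by
    have hn : ¬ Laff.Thm {1} 0 := by
      rintro (h | ⟨h1, -⟩)
      · exact absurd (Set.mem_singleton_iff.mp h) (by decide)
      · exact absurd h1 (by decide)
    obtain ⟨v, hv1, hv2⟩ := not_cpc ((htr {1} 0).not.mp hn)
    rw [himg] at hv1
    exact ⟨v, hv1 _ rfl, hv2⟩
  -- A satisfiable
  have hA_true : ∃ v, A v = true := by
    have hn : ¬ Laff.Thm {0} 2 := by
      rintro (h | ⟨h1, -⟩)
      · exact absurd (Set.mem_singleton_iff.mp h) (by decide)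
      · exact absurd h1 (by decide)
    obtain ⟨v, hv1, -⟩ := not_cpc ((htr {0} 2).not.mp hn)
    rw [himg] at hv1
    exact ⟨v, hv1 _ rfl⟩
  -- A not valid
  have hA_false : ∃ v, A v = false := by
    have hn : ¬ Laff.Thm ∅ 0 := by
      rintro (h | ⟨-, h0⟩) <;> exact absurd ‹_› (Set.notMem_empty _)
    obtain ⟨v, -, hv2⟩ := not_cpc ((htr ∅ 0).not.mp hn)
    exact ⟨v, hv2⟩
  -- C not valid
  have hC_false : ∃ v, C v = false := by
    have hn : ¬ Laff.Thm ∅ 1 := by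
      rintro (h | ⟨-, h0⟩) <;> exact absurd ‹_› (Set.notMem_empty _)
    obtain ⟨v, -, hv2⟩ := not_cpc ((htr ∅ 1).not.mp hn)
    exact ⟨v, hv2⟩
  obtain ⟨v0, hv0⟩ := hA_true
  obtain ⟨w, hCw, hAw⟩ := hCA
  obtain ⟨v1, hv1⟩ := hA_false
  obtain ⟨w2, hw2⟩ := hC_false
  have hCv0 : C v0 = true := hAC v0 hv0
  have hAaff : ∀ x y z, A (fun i => xor (x i) (xor (y i) (z i))) = xor (A x) (xor (A y) (A z)) :=
    fun x y z => eval_Aff hB (tr 0) x y z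
  have hCaff : ∀ x y z, C (fun i => xor (x i) (xor (y i) (z i))) = xor (C x) (xor (C y) (C z)) :=
    fun x y z => eval_Aff hB (tr 1) x y z
  set add : (ℕ → Bool) → (ℕ → Bool) → (ℕ → Bool) := fun a b i => xor (a i) (b i) with hadd
  have hinv : ∀ u, add v0 (add v0 u) = u := by
    intro u; funext i; simp [hadd]
  set lam : (ℕ → Bool) → Bool := fun x => xor (A (add v0 x)) (A v0) with hlam
  set mu : (ℕ → Bool) → Bool := fun x => xor (C (add v0 x)) (C v0) with hmu
  have key : ∀ (D : (ℕ → Bool) → Bool),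
      (∀ x y z, D (fun i => xor (x i) (xor (y i) (z i))) = xor (D x) (xor (D y) (D z))) →
      ∀ a b, D (add v0 (add a b)) = xor (D (add v0 a)) (xor (D (add v0 b)) (D v0)) := by
    intro D hD a b
    have h1 : add v0 (add a b) = (fun i => xor ((add v0 a) i) (xor ((add v0 b) i) (v0 i))) := by
      funext i
      simp only [hadd]
      cases v0 i <;> cases a i <;> cases b i <;> rfl
    rw [h1, hD]
  have lam_lin : ∀ a b, lam (add a b) = xor (lam a) (lam b) := by
    intro a b
    simp only [hlam, key A hAaff a b]
    cases A (add v0 a) <;> cases A (add v0 b) <;> cases A v0 <;> rfl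
  have mu_lin : ∀ a b, mu (add a b) = xor (mu a) (mu b) := by
    intro a b
    simp only [hmu, key C hCaff a b]
    cases C (add v0 a) <;> cases C (add v0 b) <;> cases C v0 <;> rfl
  have ker : ∀ x, lam x = false → mu x = false := by
    intro x hx
    have hAx : A (add v0 x) = A v0 := by
      simp only [hlam] at hx
      cases h1 : A (add v0 x) <;> cases h2 : A v0 <;> rw [h1, h2] at hx <;> first | rfl | exact absurd hx (by decide)
    have hCx : C (add v0 x) = true := hAC _ (hAx.trans hv0)
    simp only [hmu, hCx, hCv0]
    decide
  have lamx1 : lam (add v0 v1) = true := by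
    simp only [hlam, hinv v1, hv1, hv0]
    decide
  have mux2 : mu (add v0 w2) = true := by
    simp only [hmu, hinv w2, hw2, hCv0]
    decide
  have lam_imp : ∀ x, lam x = true → mu x = true := by
    intro x hx
    by_contra hmux
    rw [Bool.not_eq_true] at hmux
    have hlu2 : lam (add v0 w2) = true := by
      cases h : lam (add v0 w2)
      · have := ker _ h
        rw [mux2] at this
        exact absurd this (by decide)
      · rfl
    have hk : lam (add x (add v0 w2)) = false := by
      rw [lam_lin, hx, hlu2]
      decide
    have hmk := ker _ hk
    rw [mu_lin, hmux, mux2] at hmk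
    exact absurd hmk (by decide)
  have lam_eq_mu : ∀ x, lam x = mu x := by
    intro x
    cases h : lam x
    · rw [ker x h]
    · rw [lam_imp x h]
  have hACall : ∀ u, A u = C u := by
    intro u
    have h1 : A (add v0 (add v0 u)) = xor (lam (add v0 u)) (A v0) := by
      simp only [hlam]
      cases A (add v0 (add v0 u)) <;> cases A v0 <;> rfl
    have h2 : C (add v0 (add v0 u)) = xor (mu (add v0 u)) (C v0) := by
      simp only [hmu]
      cases C (add v0 (add v0 u)) <;> cases C v0 <;> rfl
    rw [hinv u] at h1 h2
    rw [h1, h2, lam_eq_mu, hv0, hCv0]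
  rw [hACall w, hCw] at hAw
  exact absurd hAw (by decide)

end Obstruct

section ObstructM
attribute [local instance] Classical.propDecidable
variable {B : ∀ n : ℕ, Set ((Fin n → Bool) → Bool)}

def Lpair : DeductiveSystem (Option (Bool × ℕ)) where
  Thm Γ φ := φ ∈ Γ ∨ (φ = none ∧ ∃ n, some (false, n) ∈ Γ ∧ some (true, n) ∈ Γ)
  refl φ := Or.inl rfl
  mono h hsub := by
    rcases h with h | ⟨h1, n, ha, hb⟩
    · exact Or.inl (hsub h)
    · exact Or.inr ⟨h1, n, hsub ha, hsub hb⟩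
  cut h hall := by
    rcases h with h | ⟨rfl, n, ha, hb⟩
    · exact hall _ h
    · rcases hall _ ha with ha' | ⟨hc, -⟩
      · rcases hall _ hb with hb' | ⟨hc, -⟩
        · exact Or.inr ⟨rfl, n, ha', hb'⟩
        · exact absurd hc (by simp)
      · exact absurd hc (by simp)

lemma Lpair_fin : Lpair.Finitary := by
  intro Γ φ h
  rcases h with h | ⟨h1, n, ha, hb⟩
  · exact ⟨{φ}, Set.singleton_subset_iff.mpr h, Set.finite_singleton _, Or.inl rfl⟩
  · refine ⟨{some (false, n), some (true, n)}, ?_, ?_, ?_⟩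
    · intro x hx
      rcases hx with rfl | hx
      · exact ha
      · rw [Set.mem_singleton_iff] at hx; exact hx ▸ hb
    · exact (Set.finite_singleton _).insert _
    · exact Or.inr ⟨h1, n, Or.inl rfl, Or.inr rfl⟩

def CwP {E : Finset ℕ} (w : { x // x ∈ E } → Bool) (v : ℕ → Bool) : Prop :=
  ∃ i : { x // x ∈ E }, w i = false ∧ v ↑i = true

lemma obstruct_Mono (hU : Universal (CpcB B)) : ¬(∀ n, ∀ f ∈ B n, MonoN f) := by
  intro hB
  obtain ⟨tr, htr⟩ := hU (Option (Bool × ℕ)) inferInstance Lpair Lpair_fin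
  set g : (ℕ → Bool) → Bool := (fun v => (tr none).eval v) with hgdef
  obtain ⟨E, hE⟩ := eval_support (tr none)
  set ext : ({ x // x ∈ E } → Bool) → (ℕ → Bool) :=
    (fun w i => if h : i ∈ E then w ⟨i, h⟩ else false) with hext
  set W : Finset ({ x // x ∈ E } → Bool) :=
    Finset.univ.filter (fun w => g (ext w) = false) with hW
  -- (a) g entails each clause
  have hgC : ∀ w ∈ W, ∀ v, g v = true → CwP w v := by
    intro w hw v hgv
    by_contra hc
    simp only [CwP, not_exists, not_and, Bool.not_eq_true] at hc
    set u : ℕ → Bool := fun i => if h : i ∈ E then w ⟨i, h⟩ else true with hu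
    have hvu : ∀ i, v i = true → u i = true := by
      intro i hvi
      by_cases h : i ∈ E
      · simp only [hu, dif_pos h]
        cases hwi : w ⟨i, h⟩
        · have hfalse : v i = false := hc ⟨i, h⟩ hwi
          rw [hvi] at hfalse
          exact absurd hfalse (by decide)
        · rfl
      · simp [hu, h]
    have hgu : g u = true := eval_Mono hB (tr none) v u hvu hgv
    have hsame : g u = g (ext w) := by
      apply hE
      intro i hi
      simp [hu, hext, hi]
    rw [Finset.mem_filter] at hw
    rw [hsame, hw.2] at hgu
    exact Bool.false_ne_true hgu
  -- pair entailment
  have hpair : ∀ (n : ℕ) (v : ℕ → Bool), (tr (some (false, n))).eval v = true →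
      (tr (some (true, n))).eval v = true → g v = true := by
    intro n v hva hvb
    have hth : Lpair.Thm {some (false, n), some (true, n)} none :=
      Or.inr ⟨rfl, n, Or.inl rfl, Or.inr rfl⟩
    have h := (htr _ none).mp hth
    apply h v
    rintro ψ ⟨γ, hγ, rfl⟩
    rcases hγ with rfl | hγ
    · exact hva
    · rw [Set.mem_singleton_iff] at hγ
      exact hγ ▸ hvb
  -- primality
  have hprime : ∀ w ∈ W, ∀ n : ℕ,
      (∀ v, (tr (some (false, n))).eval v = true → CwP w v) ∨
      (∀ v, (tr (some (true, n))).eval v = true → CwP w v) := by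
    intro w hw n
    by_contra hc
    push_neg at hc
    obtain ⟨⟨u, hu1, hu2⟩, ⟨v, hv1, hv2⟩⟩ := hc
    set j : ℕ → Bool := fun i => u i || v i with hj
    have h1 : (tr (some (false, n))).eval j = true :=
      eval_Mono hB _ u j (fun i h => by simp [hj, h]) hu1
    have h2 : (tr (some (true, n))).eval j = true :=
      eval_Mono hB _ v j (fun i h => by simp [hj, h]) hv1
    obtain ⟨i, hwi, hji⟩ := hgC w hw j (hpair n j h1 h2)
    have hor : u ↑i = true ∨ v ↑i = true := by
      rw [hj] at hji
      exact Bool.or_eq_true _ _ |>.mp hji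
    rcases hor with h | h
    · exact hu2 ⟨i, hwi, h⟩
    · exact hv2 ⟨i, hwi, h⟩
  -- the selection
  set LW := W.toList with hLW
  set wk : ℕ → ({ x // x ∈ E } → Bool) := fun k => LW.getD k (fun _ => false) with hwk
  have hgetD : ∀ (k : ℕ), k < LW.length → ∀ (hk : k < LW.length), wk k = LW.get ⟨k, hk⟩ := by
    intro k hk hk'
    rw [hwk]
    exact List.getD_eq_get LW _ ⟨k, hk'⟩
  set bsel : ℕ → Bool := (fun k =>
    if (∀ v, (tr (some (false, k))).eval v = true → CwP (wk k) v) then false else true)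
    with hbsel
  have hbspec : ∀ (k : ℕ), k < LW.length → ∀ v,
      (tr (some (bsel k, k))).eval v = true → CwP (wk k) v := by
    intro k hk
    have hwmem : wk k ∈ W := by
      rw [hgetD k hk hk]
      have hm : LW.get ⟨k, hk⟩ ∈ LW := LW.get_mem _
      exact Finset.mem_toList.mp hm
    by_cases hcase : ∀ v, (tr (some (false, k))).eval v = true → CwP (wk k) v
    · have hb : bsel k = false := by rw [hbsel]; simp only [if_pos hcase]
      rw [hb]
      exact hcase
    · have hb : bsel k = true := by rw [hbsel]; simp only [if_neg hcase]
      rw [hb]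
      rcases hprime _ hwmem k with h | h
      · exact absurd h hcase
      · exact h
  set X : Set (Option (Bool × ℕ)) := {ψ | ∃ k, k < LW.length ∧ ψ = some (bsel k, k)} with hX
  have hXsem : (CpcB B).Thm (tr '' X) (tr none) := by
    intro v hv
    by_contra hgv
    rw [Bool.not_eq_true] at hgv
    set w : { x // x ∈ E } → Bool := fun i => v ↑i with hwdef
    have hwW : w ∈ W := by
      rw [hW, Finset.mem_filter]
      refine ⟨Finset.mem_univ _, ?_⟩
      have hsame : g (ext w) = g v := by
        apply hE
        intro i hi
        simp [hext, hwdef, hi]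
      rw [hsame]
      exact hgv
    obtain ⟨k, hk⟩ : ∃ k : Fin LW.length, LW.get k = w :=
      List.mem_iff_get.mp (Finset.mem_toList.mpr hwW)
    have hmem : tr (some (bsel ↑k, ↑k)) ∈ tr '' X := ⟨some (bsel ↑k, ↑k), ⟨↑k, k.isLt, rfl⟩, rfl⟩
    have heval := hv _ hmem
    obtain ⟨i, hwi, hvi⟩ := hbspec ↑k k.isLt v heval
    have hget : wk ↑k = w := by
      rw [hgetD ↑k k.isLt k.isLt]
      have heta : (⟨↑k, k.isLt⟩ : Fin LW.length) = k := rfl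
      rw [heta, hk]
    rw [hget] at hwi
    have hvif : v ↑i = false := by
      rw [hwdef] at hwi
      exact hwi
    rw [hvif] at hvi
    exact Bool.false_ne_true hvi
  have hthm := (htr X none).mpr hXsem
  rcases hthm with h | ⟨-, n, ha, hb⟩
  · obtain ⟨k, -, hcon⟩ := h
    exact nomatch hcon
  · obtain ⟨k1, -, h1⟩ := ha
    obtain ⟨k2, -, h2⟩ := hb
    have e1 := Option.some.inj h1
    have e2 := Option.some.inj h2
    have hn1 : n = k1 := (Prod.ext_iff.mp e1).2
    have hn2 : n = k2 := (Prod.ext_iff.mp e2).2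
    have hb1 : bsel k1 = false := ((Prod.ext_iff.mp e1).1).symm
    have hb2 : bsel k2 = true := ((Prod.ext_iff.mp e2).1).symm
    rw [← hn1] at hb1
    rw [← hn2] at hb2
    rw [hb1] at hb2
    exact Bool.false_ne_true hb2

end ObstructM

section Post
variable {B : ∀ n : ℕ, Set ((Fin n → Bool) → Bool)}

def Not1 : (Fin 1 → Bool) → Bool := fun x => !(x 0)
def One1 : (Fin 1 → Bool) → Bool := fun _ => true
def Zero1 : (Fin 1 → Bool) → Bool := fun _ => false
def EQ2 : (Fin 2 → Bool) → Bool := fun v => v 0 == v 1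

lemma fin1_ext (w : Fin 1 → Bool) : w = ![w 0] := by
  funext i
  fin_cases i <;> rfl

lemma fin2_ext (w : Fin 2 → Bool) : w = ![w 0, w 1] := by
  funext i
  fin_cases i <;> rfl

lemma bin_eq {F G : (Fin 2 → Bool) → Bool}
    (h : ∀ a b : Bool, F ![a, b] = G ![a, b]) : F = G := by
  funext v
  rw [fin2_ext v]
  exact h (v 0) (v 1)

lemma un_eq {F G : (Fin 1 → Bool) → Bool} (h : ∀ a : Bool, F ![a] = G ![a]) : F = G := by
  funext v
  rw [fin1_ext v]
  exact h (v 0)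

def Dh {n : ℕ} (h : (Fin n → Bool) → Bool) (i : Fin n) (a : Fin n → Bool) : Bool :=
  xor (h (Function.update a i true)) (h (Function.update a i false))

lemma flip_eq {n : ℕ} (h : (Fin n → Bool) → Bool) (w : Fin n → Bool) (i : Fin n) :
    h (Function.update w i (!(w i))) = xor (h w) (Dh h i w) := by
  cases hwi : w i
  · have h1 : Function.update w i false = w := by
      rw [← hwi]; exact Function.update_eq_self i w
    simp only [Bool.not_false]
    rw [Dh, h1]
    generalize h (Function.update w i true) = p
    generalize h w = q
    cases p <;> cases q <;> rfl
  · have h1 : Function.update w i true = w := by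
      rw [← hwi]; exact Function.update_eq_self i w
    simp only [Bool.not_true]
    rw [Dh, h1]
    generalize h (Function.update w i false) = p
    generalize h w = q
    cases p <;> cases q <;> rfl

lemma aff_of_deriv_const {n : ℕ} {h : (Fin n → Bool) → Bool}
    (hd : ∀ (i : Fin n) (a b : Fin n → Bool), Dh h i a = Dh h i b) : AffN h := by
  intro x y z
  set P : (Fin n → Bool) → Bool :=
    fun u => xor (h (fun j => xor (u j) (xor (y j) (z j)))) (h u) with hP
  have hstep : ∀ (u : Fin n → Bool) (i : Fin n), P (Function.update u i (!(u i))) = P u := by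
    intro u i
    have hcombo : (fun j => xor ((Function.update u i (!(u i))) j) (xor (y j) (z j))) =
        Function.update (fun j => xor (u j) (xor (y j) (z j))) i
          (!((fun j => xor (u j) (xor (y j) (z j))) i)) := by
      funext j
      by_cases hj : j = i
      · subst hj
        rw [Function.update_self, Function.update_self]
        show (!(u j) ^^ (y j ^^ z j)) = !(u j ^^ (y j ^^ z j))
        cases u j <;> cases y j <;> cases z j <;> rfl
      · rw [Function.update_of_ne hj, Function.update_of_ne hj]
    rw [hP]
    simp only
    rw [hcombo, flip_eq h (fun j => xor (u j) (xor (y j) (z j))) i, flip_eq h u i]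
    rw [hd i (fun j => xor (u j) (xor (y j) (z j))) u]
    generalize h (fun j => xor (u j) (xor (y j) (z j))) = p
    generalize h u = q
    generalize Dh h i u = d
    cases p <;> cases q <;> cases d <;> rfl
  have hPconst : ∀ (s : Finset (Fin n)) (u u' : Fin n → Bool),
      (∀ j, j ∉ s → u j = u' j) → P u = P u' := by
    intro s
    induction s using Finset.induction_on with
    | empty =>
        intro u u' hagree
        have : u = u' := funext fun j => hagree j (Finset.notMem_empty j)
        rw [this]
    | @insert a s ha ih =>
        intro u u' hagree
        have hstep2 : P u = P (Function.update u a (u' a)) := by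
          by_cases hau : u a = u' a
          · rw [← hau, Function.update_eq_self]
          · have : u' a = !(u a) := by
              cases hua : u a <;> cases hua' : u' a <;> rw [hua, hua'] at hau <;>
                first | rfl | exact absurd rfl hau
            rw [this, hstep u a]
        rw [hstep2]
        apply ih
        intro j hj
        by_cases hja : j = a
        · subst hja; rw [Function.update_self]
        · rw [Function.update_of_ne hja]
          exact hagree j (by simp [hja, hj])
  have hxy : P x = P y := hPconst Finset.univ x y (fun j hj => absurd (Finset.mem_univ j) hj)
  have hyval : P y = xor (h z) (h y) := by
    rw [hP]
    simp only
    have : (fun j => xor (y j) (xor (y j) (z j))) = z := by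
      funext j; cases y j <;> cases z j <;> rfl
    rw [this]
  rw [hyval] at hxy
  rw [hP] at hxy
  simp only at hxy
  generalize hc : h (fun j => xor (x j) (xor (y j) (z j))) = c at hxy ⊢
  generalize h x = hx' at hxy ⊢
  generalize h y = hy' at hxy ⊢
  generalize h z = hz' at hxy ⊢
  cases c <;> cases hx' <;> cases hy' <;> cases hz' <;> first | rfl | exact absurd hxy (by decide)

lemma deriv_witness {n : ℕ} {h : (Fin n → Bool) → Bool} (hna : ¬ AffN h) :
    ∃ (i : Fin n) (a b : Fin n → Bool), a i = false ∧ b i = false ∧ Dh h i a ≠ Dh h i b := by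
  by_contra hc
  push_neg at hc
  apply hna
  apply aff_of_deriv_const
  intro i a b
  have h1 : Dh h i a = Dh h i (Function.update a i false) := by
    rw [Dh, Dh, Function.update_idem, Function.update_idem]
  have h2 : Dh h i b = Dh h i (Function.update b i false) := by
    rw [Dh, Dh, Function.update_idem, Function.update_idem]
  rw [h1, h2]
  by_contra hne
  exact absurd (hc i _ _ (Function.update_self _ _ _) (Function.update_self _ _ _)) (by
    intro hcon; exact hne hcon)

lemma aff_of_top {n : ℕ} {h : (Fin n → Bool) → Bool}
    (h3 : ∀ v w, h (fun j => xor (v j) (xor (w j) true)) =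
      xor (h v) (xor (h w) (h (fun _ => true)))) : AffN h := by
  intro x y z
  have hyz := h3 y z
  have hx := h3 x (fun j => xor (y j) (xor (z j) true))
  have e1 : (fun j => xor (x j) (xor (xor (y j) (xor (z j) true)) true)) =
      (fun j => xor (x j) (xor (y j) (z j))) := by
    funext j; cases x j <;> cases y j <;> cases z j <;> rfl
  rw [e1] at hx
  rw [hyz] at hx
  rw [hx]
  generalize h x = a
  generalize h y = b
  generalize h z = c
  generalize h (fun _ => true) = d
  cases a <;> cases b <;> cases c <;> cases d <;> rfl

lemma top_witness {n : ℕ} {h : (Fin n → Bool) → Bool} (hna : ¬ AffN h) :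
    ∃ v w, h (fun j => xor (v j) (xor (w j) true)) ≠
      xor (h v) (xor (h w) (h (fun _ => true))) := by
  by_contra hc
  push_neg at hc
  exact hna (aff_of_top hc)

lemma adj_pair {n : ℕ} (k : (Fin n → Bool) → Bool) :
    ∀ (m : ℕ) (x y : Fin n → Bool), (Finset.univ.filter (fun i => x i ≠ y i)).card ≤ m →
    (∀ i, x i = true → y i = true) → k x = true → k y = false →
    ∃ (z : Fin n → Bool) (i : Fin n), z i = false ∧ k z = true ∧
      k (Function.update z i true) = false := by
  intro m
  induction m with
  | zero =>
      intro x y hcard hle hkx hky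
      have hxy : x = y := by
        funext j
        by_contra hj
        have : j ∈ Finset.univ.filter (fun i => x i ≠ y i) := by
          simp [hj]
        have := Finset.card_pos.mpr ⟨j, this⟩
        omega
      rw [hxy, hky] at hkx
      exact absurd hkx (by decide)
  | succ m ih =>
      intro x y hcard hle hkx hky
      by_cases hxy : x = y
      · rw [hxy, hky] at hkx
        exact absurd hkx (by decide)
      · have hex : ∃ i, x i ≠ y i := by
          by_contra hc
          push_neg at hc
          exact hxy (funext hc)
        obtain ⟨i, hi⟩ := hex
        have hxi : x i = false := by
          cases hx : x i
          · rfl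
          · exact absurd (by rw [hx, hle i hx]) hi
        have hyi : y i = true := by
          cases hy : y i
          · rw [hxi] at hi; rw [hy] at hi; exact absurd rfl hi
          · rfl
        cases hkx' : k (Function.update x i true)
        · exact ⟨x, i, hxi, hkx, hkx'⟩
        · apply ih (Function.update x i true) y ?_ ?_ hkx' hky
          · have hsub : Finset.univ.filter (fun j => Function.update x i true j ≠ y j) ⊆
                (Finset.univ.filter (fun j => x j ≠ y j)).erase i := by
              intro j hj
              rw [Finset.mem_filter] at hj
              rw [Finset.mem_erase, Finset.mem_filter]
              by_cases hji : j = i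
              · subst hji
                rw [Function.update_self, hyi] at hj
                exact absurd rfl hj.2
              · rw [Function.update_of_ne hji] at hj
                exact ⟨hji, Finset.mem_univ j, hj.2⟩
            have hisin : i ∈ Finset.univ.filter (fun j => x j ≠ y j) := by
              simp [hi]
            have := Finset.card_le_card hsub
            rw [Finset.card_erase_of_mem hisin] at this
            omega
          · intro j hj
            by_cases hji : j = i
            · subst hji; exact hyi
            · rw [Function.update_of_ne hji] at hj
              exact hle j hj

lemma pathN (hnot : InClone B 1 Not1)
    (hD : ∃ n g, g ∈ B n ∧ ∃ x : Fin n → Bool, g (fun i => !(x i)) = g x)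
    (hA : ∃ n h, h ∈ B n ∧ ¬ AffN h) : InClone B 2 impFun := by
  classical
  obtain ⟨ng, gg, hgB, x, hgx⟩ := hD
  -- a constant unary function
  have hUc : InClone B 1 (fun z => gg (fun i =>
      (if x i = true then (fun w : Fin 1 → Bool => w 0) else Not1) z)) :=
    InClone.comp gg _ (.of hgB) (fun i => by
      by_cases hxi : x i = true
      · rw [if_pos hxi]; exact .proj 0
      · rw [if_neg hxi]; exact hnot)
  have hUval : (fun z : Fin 1 → Bool => gg (fun i =>
      (if x i = true then (fun w : Fin 1 → Bool => w 0) else Not1) z)) =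
      (fun _ => gg x) := by
    apply un_eq
    intro a
    cases a
    · show gg _ = gg x
      have harg : (fun i => (if x i = true then (fun w : Fin 1 → Bool => w 0) else Not1)
          ![false]) = (fun i => !(x i)) := by
        funext i
        by_cases hxi : x i = true
        · rw [if_pos hxi, hxi]; rfl
        · rw [if_neg hxi]
          have hxi' : x i = false := by
            cases hxx : x i
            · rfl
            · exact absurd hxx hxi
          rw [hxi']; rfl
      rw [harg, hgx]
    · show gg _ = gg x
      have harg : (fun i => (if x i = true then (fun w : Fin 1 → Bool => w 0) else Not1)
          ![true]) = x := by
        funext i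
        by_cases hxi : x i = true
        · rw [if_pos hxi, hxi]; rfl
        · rw [if_neg hxi]
          have hxi' : x i = false := by
            cases hxx : x i
            · rfl
            · exact absurd hxx hxi
          rw [hxi']; rfl
      rw [harg]
  rw [hUval] at hUc
  have hnotc : InClone B 1 (fun _ : Fin 1 → Bool => !(gg x)) :=
    InClone.comp Not1 (fun _ => (fun _ => gg x)) hnot (fun _ => hUc)
  have hone : InClone B 1 One1 := by
    cases hcv : gg x
    · rw [hcv] at hnotc
      exact hnotc
    · rw [hcv] at hUc
      exact hUc
  have hzero : InClone B 1 Zero1 := by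
    cases hcv : gg x
    · rw [hcv] at hUc
      exact hUc
    · rw [hcv] at hnotc
      exact hnotc
  -- build a binary non-affine function Q
  obtain ⟨nh, hh, hhB, hna⟩ := hA
  obtain ⟨i, a, b, hai, hbi, hDab⟩ := deriv_witness hna
  set garg : Fin nh → ((Fin 2 → Bool) → Bool) := fun l =>
    if l = i then (fun v => v 0)
    else if a l = b l then
      (if a l = true then (fun v => One1 (fun _ => v 0)) else (fun v => Zero1 (fun _ => v 0)))
    else (if a l = true then (fun v => Not1 (fun _ => v 1)) else (fun v => v 1)) with hgarg
  have hgargC : ∀ l, InClone B 2 (garg l) := by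
    intro l
    simp only [hgarg]
    by_cases h1 : l = i
    · rw [if_pos h1]; exact .proj 0
    · rw [if_neg h1]
      by_cases h2 : a l = b l
      · rw [if_pos h2]
        by_cases h3 : a l = true
        · rw [if_pos h3]
          exact InClone.comp One1 (fun _ => fun v => v 0) hone (fun _ => .proj 0)
        · rw [if_neg h3]
          exact InClone.comp Zero1 (fun _ => fun v => v 0) hzero (fun _ => .proj 0)
      · rw [if_neg h2]
        by_cases h3 : a l = true
        · rw [if_pos h3]
          exact InClone.comp Not1 (fun _ => fun v => v 1) hnot (fun _ => .proj 1)
        · rw [if_neg h3]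
          exact .proj 1
  set Q : (Fin 2 → Bool) → Bool := fun v => hh (fun l => garg l v) with hQ
  have hQC : InClone B 2 Q := InClone.comp hh garg (.of hhB) hgargC
  have hbool : ∀ c : Bool, c ≠ true → c = false := by decide
  have hbool2 : ∀ c d : Bool, c ≠ d → c = true → d = false := by decide
  have hbool3 : ∀ c d : Bool, c ≠ d → c = false → d = true := by decide
  have hQ0 : ∀ s : Bool, Q ![s, false] = hh (Function.update a i s) := by
    intro s
    rw [hQ]
    show hh (fun l => garg l ![s, false]) = hh (Function.update a i s)
    congr 1
    funext l
    by_cases h1 : l = i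
    · subst h1
      rw [Function.update_self]
      simp only [hgarg]
      simp
    · rw [Function.update_of_ne h1]
      simp only [hgarg]
      simp only [if_neg h1]
      by_cases h2 : a l = b l
      · rw [if_pos h2]
        by_cases h3 : a l = true
        · rw [if_pos h3, h3]; rfl
        · rw [if_neg h3, hbool _ h3]; rfl
      · rw [if_neg h2]
        by_cases h3 : a l = true
        · rw [if_pos h3, h3]; rfl
        · rw [if_neg h3, hbool _ h3]; rfl
  have hQ1 : ∀ s : Bool, Q ![s, true] = hh (Function.update b i s) := by
    intro s
    rw [hQ]
    show hh (fun l => garg l ![s, true]) = hh (Function.update b i s)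
    congr 1
    funext l
    by_cases h1 : l = i
    · subst h1
      rw [Function.update_self]
      simp only [hgarg]
      simp
    · rw [Function.update_of_ne h1]
      simp only [hgarg]
      simp only [if_neg h1]
      by_cases h2 : a l = b l
      · rw [if_pos h2]
        by_cases h3 : a l = true
        · rw [if_pos h3, ← h2, h3]; rfl
        · rw [if_neg h3, ← h2, hbool _ h3]; rfl
      · rw [if_neg h2]
        by_cases h3 : a l = true
        · rw [if_pos h3, hbool2 _ _ h2 h3]; rfl
        · rw [if_neg h3, hbool3 _ _ h2 (hbool _ h3)]; rfl
  have hup_a : Function.update a i false = a := by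
    rw [← hai]; exact Function.update_eq_self i a
  have hup_b : Function.update b i false = b := by
    rw [← hbi]; exact Function.update_eq_self i b
  have v00 : Q ![false, false] = hh a := by rw [hQ0 false, hup_a]
  have v10 : Q ![true, false] = hh (Function.update a i true) := hQ0 true
  have v01 : Q ![false, true] = hh b := by rw [hQ1 false, hup_b]
  have v11 : Q ![true, true] = hh (Function.update b i true) := hQ1 true
  have hsq : xor (xor (Q ![false, false]) (Q ![true, false]))
      (xor (Q ![false, true]) (Q ![true, true])) = true := by
    rw [v00, v10, v01, v11]
    have hDab' : xor (hh (Function.update a i true)) (hh a) ≠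
        xor (hh (Function.update b i true)) (hh b) := by
      rw [Dh, Dh, hup_a, hup_b] at hDab
      exact hDab
    revert hDab'
    generalize hh a = p
    generalize hh (Function.update a i true) = q
    generalize hh b = r
    generalize hh (Function.update b i true) = s
    intro hD
    cases p <;> cases q <;> cases r <;> cases s <;>
      first | rfl | exact absurd rfl hD
  have hQval : ∀ u w : Bool, Q ![u, w] =
      (if u then (if w then Q ![true, true] else Q ![true, false])
       else (if w then Q ![false, true] else Q ![false, false])) := by
    intro u w
    cases u <;> cases w <;> simp
  -- the AND function
  set in0 : (Fin 2 → Bool) → Bool :=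
    if xor (Q ![false, false]) (Q ![false, true]) = true
    then (fun v => Not1 (fun _ => v 0)) else (fun v => v 0) with hin0
  set in1 : (Fin 2 → Bool) → Bool :=
    if xor (Q ![false, false]) (Q ![true, false]) = true
    then (fun v => Not1 (fun _ => v 1)) else (fun v => v 1) with hin1
  have hin0C : InClone B 2 in0 := by
    rw [hin0]
    split_ifs
    · exact InClone.comp Not1 (fun _ => fun v => v 0) hnot (fun _ => .proj 0)
    · exact .proj 0
  have hin1C : InClone B 2 in1 := by
    rw [hin1]
    split_ifs
    · exact InClone.comp Not1 (fun _ => fun v => v 1) hnot (fun _ => .proj 1)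
    · exact .proj 1
  have hin0val : ∀ u w : Bool, in0 ![u, w] = xor u (xor (Q ![false, false]) (Q ![false, true])) := by
    intro u w
    rw [hin0]
    cases hb : xor (Q ![false, false]) (Q ![false, true])
    · rw [if_neg (show ¬((false : Bool) = true) by decide)]
      show u = xor u false
      cases u <;> rfl
    · rw [if_pos (show ((true : Bool) = true) by rfl)]
      show (!(![u, w] 0)) = xor u true
      cases u <;> rfl
  have hin1val : ∀ u w : Bool, in1 ![u, w] = xor w (xor (Q ![false, false]) (Q ![true, false])) := by
    intro u w
    rw [hin1]
    cases hb : xor (Q ![false, false]) (Q ![true, false])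
    · rw [if_neg (show ¬((false : Bool) = true) by decide)]
      show w = xor w false
      cases w <;> rfl
    · rw [if_pos (show ((true : Bool) = true) by rfl)]
      show (!(![u, w] 1)) = xor w true
      cases w <;> rfl
  set QC : (Fin 2 → Bool) → Bool :=
    fun v => Q (fun j => (if j = (0 : Fin 2) then in0 else in1) v) with hQC2
  have hQCC : InClone B 2 QC :=
    InClone.comp Q _ hQC (fun j => by
      by_cases hj : j = (0 : Fin 2)
      · rw [if_pos hj]; exact hin0C
      · rw [if_neg hj]; exact hin1C)
  have hQCval : ∀ u w : Bool, QC ![u, w] = Q ![in0 ![u, w], in1 ![u, w]] := by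
    intro u w
    rw [hQC2]
    show Q (fun j => (if j = (0 : Fin 2) then in0 else in1) ![u, w]) = _
    congr 1
    funext j
    fin_cases j
    · simp
    · simp
  set AND2 : (Fin 2 → Bool) → Bool :=
    if xor (Q ![false, false]) ((xor (Q ![false, false]) (Q ![true, false])) &&
        (xor (Q ![false, false]) (Q ![false, true]))) = true
    then (fun v => Not1 (fun _ => QC v)) else QC with hAND
  have hANDC : InClone B 2 AND2 := by
    rw [hAND]
    split_ifs
    · exact InClone.comp Not1 (fun _ => QC) hnot (fun _ => hQCC)
    · exact hQCC
  have hANDval : ∀ u w : Bool, AND2 ![u, w] =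
      xor (QC ![u, w]) (xor (Q ![false, false]) ((xor (Q ![false, false]) (Q ![true, false])) &&
        (xor (Q ![false, false]) (Q ![false, true])))) := by
    intro u w
    rw [hAND]
    cases hb : xor (Q ![false, false]) ((xor (Q ![false, false]) (Q ![true, false])) &&
        (xor (Q ![false, false]) (Q ![false, true])))
    · rw [if_neg (show ¬((false : Bool) = true) by decide)]
      cases QC ![u, w] <;> rfl
    · rw [if_pos (show ((true : Bool) = true) by rfl)]
      show (!(QC ![u, w])) = _
      cases QC ![u, w] <;> rfl
  have hmagic : ∀ u w : Bool, AND2 ![u, w] = (u && w) := by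
    intro u w
    rw [hANDval, hQCval, hin0val, hin1val, hQval]
    revert hsq
    generalize Q ![false, false] = p
    generalize Q ![true, false] = q
    generalize Q ![false, true] = r
    generalize Q ![true, true] = s
    revert u w
    revert p q r s
    decide
  -- implication from AND and NOT
  set PRE : (Fin 2 → Bool) → Bool :=
    fun v => AND2 (fun j => (if j = (0 : Fin 2) then (fun v : Fin 2 → Bool => v 0)
      else (fun v : Fin 2 → Bool => Not1 (fun _ => v 1))) v) with hPRE
  have hPREC : InClone B 2 PRE :=
    InClone.comp AND2 _ hANDC (fun j => by
      by_cases hj : j = (0 : Fin 2)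
      · rw [if_pos hj]; exact .proj 0
      · rw [if_neg hj]
        exact InClone.comp Not1 (fun _ => fun v => v 1) hnot (fun _ => .proj 1))
  have hPREval : ∀ u w : Bool, PRE ![u, w] = (u && !w) := by
    intro u w
    rw [hPRE]
    show AND2 (fun j => (if j = (0 : Fin 2) then (fun v : Fin 2 → Bool => v 0)
      else (fun v : Fin 2 → Bool => Not1 (fun _ => v 1))) ![u, w]) = (u && !w)
    have harg : (fun j => (if j = (0 : Fin 2) then (fun v : Fin 2 → Bool => v 0)
        else (fun v : Fin 2 → Bool => Not1 (fun _ => v 1))) ![u, w]) = ![u, !w] := by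
      funext j
      fin_cases j
      · simp
      · simp [Not1]
    rw [harg, hmagic]
  set IMP : (Fin 2 → Bool) → Bool := fun v => Not1 (fun _ => PRE v) with hIMP
  have hIMPC : InClone B 2 IMP :=
    InClone.comp Not1 (fun _ => PRE) hnot (fun _ => hPREC)
  have hIMPeq : IMP = impFun := by
    apply bin_eq
    intro u w
    rw [hIMP]
    show (!(PRE ![u, w])) = impFun ![u, w]
    rw [hPREval]
    cases u <;> cases w <;> rfl
  rw [← hIMPeq]
  exact hIMPC


theorem post_imp
    (hP : ∃ n f, f ∈ B n ∧ f (fun _ => false) = true)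
    (hD : ∃ n g, g ∈ B n ∧ ∃ x : Fin n → Bool, g (fun i => !(x i)) = g x)
    (hA : ∃ n h, h ∈ B n ∧ ¬ AffN h)
    (hM : ∃ n k, k ∈ B n ∧ ∃ x y : Fin n → Bool,
      (∀ i, x i = true → y i = true) ∧ k x = true ∧ k y = false) :
    InClone B 2 impFun := by
  classical
  obtain ⟨nf, ff, hfB, hf0⟩ := hP
  have hdiagC : InClone B 1 (fun z => ff (fun _ => z 0)) :=
    InClone.comp ff (fun _ => fun z => z 0) (.of hfB) (fun _ => .proj 0)
  cases hf1 : ff (fun _ => true)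
  · -- NOT is in the clone
    have hnot : InClone B 1 Not1 := by
      have heq : (fun z : Fin 1 → Bool => ff (fun _ => z 0)) = Not1 := by
        apply un_eq
        intro a
        cases a
        · show ff (fun _ => false) = !false
          exact hf0
        · show ff (fun _ => true) = !true
          exact hf1
      rw [← heq]
      exact hdiagC
    exact pathN hnot hD hA
  · -- constant one is in the clone
    have hone : InClone B 1 One1 := by
      have heq : (fun z : Fin 1 → Bool => ff (fun _ => z 0)) = One1 := by
        apply un_eq
        intro a
        cases a
        · show ff (fun _ => false) = true
          exact hf0
        · show ff (fun _ => true) = true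
          exact hf1
      rw [← heq]
      exact hdiagC
    -- adjacent decreasing pair for a non-monotone function
    obtain ⟨nk, kk, hkB, xm, ym, hlem, hkxm, hkym⟩ := hM
    obtain ⟨xv, i, hxi, hkx, hky⟩ :=
      adj_pair kk ((Finset.univ.filter (fun j => xm j ≠ ym j)).card) xm ym le_rfl hlem hkxm hkym
    have hbool : ∀ c : Bool, c ≠ true → c = false := by decide
    -- the binary function bb
    set bargs : Fin nk → ((Fin 2 → Bool) → Bool) := fun l =>
      if l = i then (fun v => v 0)
      else if xv l = true then (fun v => One1 (fun _ => v 0)) else (fun v => v 1) with hbargs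
    have hbargsC : ∀ l, InClone B 2 (bargs l) := by
      intro l
      simp only [hbargs]
      by_cases h1 : l = i
      · rw [if_pos h1]; exact .proj 0
      · rw [if_neg h1]
        by_cases h2 : xv l = true
        · rw [if_pos h2]
          exact InClone.comp One1 (fun _ => fun v => v 0) hone (fun _ => .proj 0)
        · rw [if_neg h2]; exact .proj 1
    set bb : (Fin 2 → Bool) → Bool := fun v => kk (fun l => bargs l v) with hbb
    have hbbC : InClone B 2 bb := InClone.comp kk bargs (.of hkB) hbargsC
    have hbval : ∀ s : Bool, bb ![s, false] = kk (Function.update xv i s) := by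
      intro s
      rw [hbb]
      show kk (fun l => bargs l ![s, false]) = kk (Function.update xv i s)
      congr 1
      funext l
      by_cases h1 : l = i
      · subst h1
        rw [Function.update_self]
        simp only [hbargs]
        simp
      · rw [Function.update_of_ne h1]
        simp only [hbargs, if_neg h1]
        by_cases h2 : xv l = true
        · rw [if_pos h2, h2]; rfl
        · rw [if_neg h2, hbool _ h2]; rfl
    have hb00 : bb ![false, false] = true := by
      rw [hbval false]
      rw [show Function.update xv i false = xv from by
        rw [← hxi]; exact Function.update_eq_self i xv]
      exact hkx
    have hb10 : bb ![true, false] = false := by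
      rw [hbval true]
      exact hky
    -- diag of bb
    have hdbC : InClone B 1 (fun z : Fin 1 → Bool => bb (fun _ => z 0)) :=
      InClone.comp bb (fun _ => fun z => z 0) hbbC (fun _ => .proj 0)
    have hdb0 : (fun _ : Fin 2 => (![false] : Fin 1 → Bool) 0) = ![false, false] := by
      funext j; fin_cases j <;> rfl
    have hdb1 : (fun _ : Fin 2 => (![true] : Fin 1 → Bool) 0) = ![true, true] := by
      funext j; fin_cases j <;> rfl
    cases hq : bb ![true, true]
    · -- diagonal of bb is NOT
      have hnot : InClone B 1 Not1 := by
        have heq : (fun z : Fin 1 → Bool => bb (fun _ => z 0)) = Not1 := by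
          apply un_eq
          intro a
          cases a
          · show bb (fun _ => (![false] : Fin 1 → Bool) 0) = !false
            rw [hdb0]
            exact hb00
          · show bb (fun _ => (![true] : Fin 1 → Bool) 0) = !true
            rw [hdb1]
            exact hq
        rw [← heq]
        exact hdbC
      exact pathN hnot hD hA
    · cases hp : bb ![false, true]
      · -- bb is EQ2 : the hard case
        have heq2 : InClone B 2 EQ2 := by
          have heq : bb = EQ2 := by
            apply bin_eq
            intro a c
            cases a <;> cases c
            · rw [hb00]; rfl
            · rw [hp]; rfl
            · rw [hb10]; rfl
            · rw [hq]; rfl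
          rw [← heq]
          exact hbbC
        -- analyse the non-affine function
        obtain ⟨nh, hh, hhB, hna⟩ := id hA
        have hdhC : InClone B 1 (fun z : Fin 1 → Bool => hh (fun _ => z 0)) :=
          InClone.comp hh (fun _ => fun z => z 0) (.of hhB) (fun _ => .proj 0)
        cases hh1 : hh (fun _ => true)
        · -- hh (1,...,1) = false : get NOT
          cases hh0 : hh (fun _ => false)
          · -- hh is constantly false on diag : zero constant
            have hzero : InClone B 1 Zero1 := by
              have heq : (fun z : Fin 1 → Bool => hh (fun _ => z 0)) = Zero1 := by
                apply un_eq
                intro a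
                cases a
                · show hh (fun _ => false) = false
                  exact hh0
                · show hh (fun _ => true) = false
                  exact hh1
              rw [← heq]
              exact hdhC
            -- NOT from kk with both constants
            set margs : Fin nk → ((Fin 1 → Bool) → Bool) := fun l =>
              if l = i then (fun z => z 0)
              else if xv l = true then (fun z => One1 (fun _ => z 0))
              else (fun z => Zero1 (fun _ => z 0)) with hmargs
            have hmargsC : ∀ l, InClone B 1 (margs l) := by
              intro l
              simp only [hmargs]
              by_cases h1 : l = i
              · rw [if_pos h1]; exact .proj 0
              · rw [if_neg h1]
                by_cases h2 : xv l = true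
                · rw [if_pos h2]
                  exact InClone.comp One1 (fun _ => fun z => z 0) hone (fun _ => .proj 0)
                · rw [if_neg h2]
                  exact InClone.comp Zero1 (fun _ => fun z => z 0) hzero (fun _ => .proj 0)
            set mm : (Fin 1 → Bool) → Bool := fun z => kk (fun l => margs l z) with hmm
            have hmmC : InClone B 1 mm := InClone.comp kk margs (.of hkB) hmargsC
            have hmval : ∀ s : Bool, mm ![s] = kk (Function.update xv i s) := by
              intro s
              rw [hmm]
              show kk (fun l => margs l ![s]) = kk (Function.update xv i s)
              congr 1
              funext l
              by_cases h1 : l = i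
              · subst h1
                rw [Function.update_self]
                simp only [hmargs]
                simp
              · rw [Function.update_of_ne h1]
                simp only [hmargs, if_neg h1]
                by_cases h2 : xv l = true
                · rw [if_pos h2, h2]; rfl
                · rw [if_neg h2, hbool _ h2]; rfl
            have hnot : InClone B 1 Not1 := by
              have heq : mm = Not1 := by
                apply un_eq
                intro a
                cases a
                · show mm ![false] = !false
                  rw [hmval false]
                  rw [show Function.update xv i false = xv from by
                    rw [← hxi]; exact Function.update_eq_self i xv]
                  exact hkx
                · show mm ![true] = !true
                  rw [hmval true]
                  exact hky
              rw [← heq]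
              exact hmmC
            exact pathN hnot hD hA
          · -- diag of hh is NOT
            have hnot : InClone B 1 Not1 := by
              have heq : (fun z : Fin 1 → Bool => hh (fun _ => z 0)) = Not1 := by
                apply un_eq
                intro a
                cases a
                · show hh (fun _ => false) = !false
                  exact hh0
                · show hh (fun _ => true) = !true
                  exact hh1
              rw [← heq]
              exact hdhC
            exact pathN hnot hD hA
        · -- hh (1,...,1) = true : the genuine EQ case
          obtain ⟨v, w, hvw⟩ := top_witness hna
          set qargs : Fin nh → ((Fin 2 → Bool) → Bool) := fun l =>
            if v l = true then (if w l = true then (fun u => One1 (fun _ => u 0)) else EQ2)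
            else (if w l = true then (fun u => u 1) else (fun u => u 0)) with hqargs
          have hqargsC : ∀ l, InClone B 2 (qargs l) := by
            intro l
            simp only [hqargs]
            by_cases h1 : v l = true
            · rw [if_pos h1]
              by_cases h2 : w l = true
              · rw [if_pos h2]
                exact InClone.comp One1 (fun _ => fun u => u 0) hone (fun _ => .proj 0)
              · rw [if_neg h2]; exact heq2
            · rw [if_neg h1]
              by_cases h2 : w l = true
              · rw [if_pos h2]; exact .proj 1
              · rw [if_neg h2]; exact .proj 0
          set q2 : (Fin 2 → Bool) → Bool := fun u => hh (fun l => qargs l u) with hq2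
          have hq2C : InClone B 2 q2 := InClone.comp hh qargs (.of hhB) hqargsC
          have hq2val : ∀ a c : Bool, q2 ![a, c] = hh (fun l =>
              if v l = true then (if w l = true then true else (a == c))
              else (if w l = true then c else a)) := by
            intro a c
            rw [hq2]
            show hh (fun l => qargs l ![a, c]) = hh _
            congr 1
            funext l
            simp only [hqargs]
            by_cases h1 : v l = true
            · rw [if_pos h1, if_pos h1]
              by_cases h2 : w l = true
              · rw [if_pos h2, if_pos h2]; rfl
              · rw [if_neg h2, if_neg h2]; rfl
            · rw [if_neg h1, if_neg h1]
              by_cases h2 : w l = true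
              · rw [if_pos h2, if_pos h2]; rfl
              · rw [if_neg h2, if_neg h2]; rfl
          have hq200 : q2 ![false, false] = hh v := by
            rw [hq2val]
            congr 1
            funext l
            cases hvl : v l <;> cases hwl : w l <;> simp [hvl, hwl]
          have hq201 : q2 ![false, true] = hh w := by
            rw [hq2val]
            congr 1
            funext l
            cases hvl : v l <;> cases hwl : w l <;> simp [hvl, hwl]
          have hq210 : q2 ![true, false] = hh (fun j => xor (v j) (xor (w j) true)) := by
            rw [hq2val]
            congr 1
            funext l
            cases hvl : v l <;> cases hwl : w l <;> simp [hvl, hwl]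
          have hq211 : q2 ![true, true] = hh (fun _ => true) := by
            rw [hq2val]
            congr 1
            funext l
            cases hvl : v l <;> cases hwl : w l <;> simp [hvl, hwl]
          have hq11' : q2 ![true, true] = true := by rw [hq211, hh1]
          have hcon : q2 ![true, false] = xor (q2 ![false, false]) (q2 ![false, true]) := by
            rw [hq200, hq201, hq210]
            have hvw' := hvw
            rw [hh1] at hvw'
            revert hvw'
            generalize hh (fun j => xor (v j) (xor (w j) true)) = p2
            generalize hh v = p0
            generalize hh w = p1
            intro hvw'
            cases p0 <;> cases p1 <;> cases p2 <;>
              first | rfl | exact absurd rfl hvw'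
          -- four cases
          cases hp0 : q2 ![false, false] <;> cases hp1 : q2 ![false, true]
          · -- AND case
            have hp2 : q2 ![true, false] = false := by
              rw [hcon, hp0, hp1]; rfl
            set IMPc : (Fin 2 → Bool) → Bool := fun u =>
              EQ2 (fun j => (if j = (0 : Fin 2) then (fun u : Fin 2 → Bool => u 0) else q2) u)
              with hIMPc
            have hIMPcC : InClone B 2 IMPc :=
              InClone.comp EQ2 _ heq2 (fun j => by
                by_cases hj : j = (0 : Fin 2)
                · rw [if_pos hj]; exact .proj 0
                · rw [if_neg hj]; exact hq2C)
            have hIv : ∀ a c : Bool, IMPc ![a, c] = EQ2 ![a, q2 ![a, c]] := by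
              intro a c
              rw [hIMPc]
              show EQ2 (fun j => (if j = (0 : Fin 2) then (fun u : Fin 2 → Bool => u 0) else q2)
                ![a, c]) = _
              congr 1
              funext j
              fin_cases j <;> simp
            have heq : IMPc = impFun := by
              apply bin_eq
              intro a c
              rw [hIv]
              cases a <;> cases c
              · rw [hp0]; rfl
              · rw [hp1]; rfl
              · rw [hp2]; rfl
              · rw [hq11']; rfl
            rw [← heq]
            exact hIMPcC
          · -- OR case
            have hp2 : q2 ![true, false] = true := by
              rw [hcon, hp0, hp1]; rfl
            set IMPc : (Fin 2 → Bool) → Bool := fun u =>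
              q2 (fun j => (if j = (0 : Fin 2) then EQ2 else (fun u : Fin 2 → Bool => u 1)) u)
              with hIMPc
            have hIMPcC : InClone B 2 IMPc :=
              InClone.comp q2 _ hq2C (fun j => by
                by_cases hj : j = (0 : Fin 2)
                · rw [if_pos hj]; exact heq2
                · rw [if_neg hj]; exact .proj 1)
            have hIv : ∀ a c : Bool, IMPc ![a, c] = q2 ![EQ2 ![a, c], c] := by
              intro a c
              rw [hIMPc]
              show q2 (fun j => (if j = (0 : Fin 2) then EQ2 else (fun u : Fin 2 → Bool => u 1))
                ![a, c]) = _
              congr 1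
              funext j
              fin_cases j <;> simp
            have heq : IMPc = impFun := by
              apply bin_eq
              intro a c
              rw [hIv]
              cases a <;> cases c
              · show q2 ![true, false] = _
                rw [hp2]; rfl
              · show q2 ![false, true] = _
                rw [hp1]; rfl
              · show q2 ![false, false] = _
                rw [hp0]; rfl
              · show q2 ![true, true] = _
                rw [hq11']; rfl
            rw [← heq]
            exact hIMPcC
          · -- converse implication case
            have hp2 : q2 ![true, false] = true := by
              rw [hcon, hp0, hp1]; rfl
            set IMPc : (Fin 2 → Bool) → Bool := fun u =>
              q2 (fun j => (if j = (0 : Fin 2) then (fun u : Fin 2 → Bool => u 1)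
                else (fun u : Fin 2 → Bool => u 0)) u) with hIMPc
            have hIMPcC : InClone B 2 IMPc :=
              InClone.comp q2 _ hq2C (fun j => by
                by_cases hj : j = (0 : Fin 2)
                · rw [if_pos hj]; exact .proj 1
                · rw [if_neg hj]; exact .proj 0)
            have hIv : ∀ a c : Bool, IMPc ![a, c] = q2 ![c, a] := by
              intro a c
              rw [hIMPc]
              show q2 (fun j => (if j = (0 : Fin 2) then (fun u : Fin 2 → Bool => u 1)
                else (fun u : Fin 2 → Bool => u 0)) ![a, c]) = _
              congr 1
              funext j
              fin_cases j <;> simp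
            have heq : IMPc = impFun := by
              apply bin_eq
              intro a c
              rw [hIv]
              cases a <;> cases c
              · rw [hp0]; rfl
              · rw [hp2]; rfl
              · rw [hp1]; rfl
              · rw [hq11']; rfl
            rw [← heq]
            exact hIMPcC
          · -- implication case : q2 itself
            have hp2 : q2 ![true, false] = false := by
              rw [hcon, hp0, hp1]; rfl
            have heq : q2 = impFun := by
              apply bin_eq
              intro a c
              cases a <;> cases c
              · rw [hp0]; rfl
              · rw [hp1]; rfl
              · rw [hp2]; rfl
              · rw [hq11']; rfl
            rw [← heq]
            exact hq2C
      · -- bb is implication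
        have heq : bb = impFun := by
          apply bin_eq
          intro a c
          cases a <;> cases c
          · rw [hb00]; rfl
          · rw [hp]; rfl
          · rw [hb10]; rfl
          · rw [hq]; rfl
        rw [← heq]
        exact hbbC


end Post

/-- A fragment `CPC↾_B` of classical propositional logic is universal iff implication
is definable from `B`. -/
theorem cpcB_universal_iff (B : ∀ n : ℕ, Set ((Fin n → Bool) → Bool)) :
    Universal (CpcB B) ↔ InClone B 2 impFun := by
  constructor
  · intro hU
    have hboolP : ∀ a : Bool, a ≠ false → a = true := by decide
    have hboolD : ∀ a b : Bool, a ≠ !b → a = b := by decide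
    have hboolM : ∀ a : Bool, a ≠ true → a = false := by decide
    apply post_imp
    · have h := obstruct_P0 hU
      push_neg at h
      obtain ⟨n, f, hfB, hf⟩ := h
      exact ⟨n, f, hfB, hboolP _ hf⟩
    · have h := obstruct_SD hU
      push_neg at h
      obtain ⟨n, f, hfB, x, hfx⟩ := h
      exact ⟨n, f, hfB, x, hboolD _ _ hfx⟩
    · have h := obstruct_Aff hU
      push_neg at h
      obtain ⟨n, f, hfB, hf⟩ := h
      exact ⟨n, f, hfB, hf⟩
    · have h := obstruct_Mono hU
      push_neg at h
      obtain ⟨n, f, hfB, hf⟩ := h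
      rw [MonoN] at hf
      push_neg at hf
      obtain ⟨x, y, hle, hfx, hfy⟩ := hf
      exact ⟨n, f, hfB, x, y, hle, hfx, hboolM _ hfy⟩
  · intro h
    exact forward h
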